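/- Furstenberg's Central Sets Theorem for ℕ (finitely many sequences): let A be a central subset of ℕ, let k ∈ ℕ, and for each i ∈ {1,…,k} let ⟨y_{i,n}⟩ be a sequence in ℤ. Then there exist a sequence ⟨a_n⟩ in ℕ and a sequence ⟨H_n⟩ of finite nonempty subsets of ℕ with max H_n < min H_{n+1} for each n, such that for each i ∈ {1,…,k} and each finite nonempty F ⊆ ℕ, ∑_{n∈F} (a_n + ∑_{t∈H_n} y_{i,t}) ∈ A. -/

import Mathlib

/-- A subset of ℕ is thick iff it contains arbitrarily long intervals. -/
def NatThick (A : Set ℕ) : Prop := ∀ L : ℕ, ∃ a : ℕ, ∀ j ≤ L, a + j ∈ A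

/-- A subset of ℕ is piecewise syndetic iff `⋃_{i=1}^r (A - i)` is thick for some `r`. -/
def NatPiecewiseSyndetic (A : Set ℕ) : Prop :=
  ∃ r : ℕ, 0 < r ∧ NatThick {s : ℕ | ∃ i ∈ Finset.Icc 1 r, s + i ∈ A}

/-- Combinatorial characterization of central subsets of ℕ. -/
def NatCentral (A : Set ℕ) : Prop :=
  ∃ C : ℕ → Set ℕ, (∀ n, C n ⊆ A) ∧ (∀ n, C (n + 1) ⊆ C n) ∧
    (∀ n, NatPiecewiseSyndetic (C n)) ∧
    (∀ n, ∀ x ∈ C n, ∃ m, C m ⊆ {s : ℕ | x + s ∈ C n})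

lemma natPWS_key (D : Set ℕ) (hD : NatPiecewiseSyndetic D) (k : ℕ) (y : Fin k → ℕ → ℤ)
    (n0 : ℕ) :
    ∃ a ∈ D, ∃ H : Finset ℕ, H.Nonempty ∧ (∀ t ∈ H, n0 ≤ t) ∧
      ∀ i : Fin k, ∃ b ∈ D, (b : ℤ) = (a : ℤ) + ∑ t ∈ H, y i t := by
  classical
  obtain ⟨r, hr, hthick⟩ := hD
  obtain ⟨ι, ιfin, hHJ⟩ :=
    Combinatorics.Line.exists_mono_in_high_dimension (Option (Fin k)) (Fin (r + 1))
  haveI := ιfin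
  set t : ι → ℕ := fun j => n0 + (Fintype.equivFin ι j : ℕ) with ht
  have htinj : ∀ j1 ∈ (Finset.univ : Finset ι), ∀ j2 ∈ Finset.univ, t j1 = t j2 → j1 = j2 := by
    intro j1 _ j2 _ h
    have h2 : (Fintype.equivFin ι j1 : ℕ) = (Fintype.equivFin ι j2 : ℕ) := by
      simpa [ht] using h
    exact (Fintype.equivFin ι).injective (Fin.ext h2)
  set g : Option (Fin k) → ι → ℤ := fun x j => x.elim 0 fun i => y i (t j) with hg
  set M : ℕ := ∑ j : ι, Finset.univ.sup fun x : Option (Fin k) => (g x j).natAbs with hM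
  set f : (ι → Option (Fin k)) → ℤ := fun w => ∑ j, g (w j) j with hf
  have hbnd : ∀ w, -(M : ℤ) ≤ f w ∧ f w ≤ (M : ℤ) := by
    intro w
    have h1 : |f w| ≤ (M : ℤ) := by
      calc |f w| ≤ ∑ j, |g (w j) j| := Finset.abs_sum_le_sum_abs _ _
        _ ≤ (M : ℤ) := by
            rw [hM]
            push_cast
            refine Finset.sum_le_sum fun j _ => ?_
            rw [Int.abs_eq_natAbs]
            exact_mod_cast Finset.le_sup (f := fun x : Option (Fin k) => (g x j).natAbs)
              (Finset.mem_univ (w j))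
    exact abs_le.mp h1
  obtain ⟨b, hb⟩ := hthick (2 * M)
  have hE : ∀ w, ∃ d, d ∈ Finset.Icc 1 r ∧ b + (f w + M).toNat + d ∈ D := by
    intro w
    have h1 : (f w + M).toNat ≤ 2 * M := by
      have := (hbnd w).2; omega
    exact hb _ h1
  choose dd hdd1 hdd2 using hE
  have hddlt : ∀ w, dd w < r + 1 := fun w => by
    have := (Finset.mem_Icc.mp (hdd1 w)).2; omega
  obtain ⟨l, c, hc⟩ := hHJ fun w => (⟨dd w, hddlt w⟩ : Fin (r + 1))
  have hdc : ∀ x, dd (l x) = (c : ℕ) := fun x => congrArg Fin.val (hc x)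
  set W : Finset ι := Finset.univ.filter fun j => l.idxFun j = none with hW
  have hWne : W.Nonempty := by
    obtain ⟨j, hj⟩ := l.proper
    exact ⟨j, by simp [hW, hj]⟩
  have hsplit : ∀ x : Option (Fin k), f (l x) = f (l none) + ∑ j ∈ W, g x j := by
    intro x
    have hpt : ∀ j : ι, g (l x j) j = g (l none j) j + if j ∈ W then g x j else 0 := by
      intro j
      by_cases hj : l.idxFun j = none
      · have h1 : l x j = x := by simp [Combinatorics.Line.coe_apply, hj]
        have h2 : l none j = none := by simp [Combinatorics.Line.coe_apply, hj]
        simp [h1, h2, hW, hj, hg]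
      · obtain ⟨aj, haj⟩ := Option.ne_none_iff_exists'.mp hj
        have h1 : l x j = aj := by simp [Combinatorics.Line.coe_apply, haj]
        have h2 : l none j = aj := by simp [Combinatorics.Line.coe_apply, haj]
        rw [h1, h2]; simp [hW, hj]
    calc f (l x) = ∑ j, (g (l none j) j + if j ∈ W then g x j else 0) :=
          Finset.sum_congr rfl fun j _ => hpt j
      _ = f (l none) + ∑ j ∈ W, g x j := by
          rw [Finset.sum_add_distrib, Finset.sum_ite_mem, Finset.univ_inter]
  have hnn : ∀ w, (0 : ℤ) ≤ f w + M := fun w => by have := (hbnd w).1; omega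
  refine ⟨b + (f (l none) + M).toNat + dd (l none), hdd2 (l none), W.image t,
    hWne.image t, ?_, ?_⟩
  · intro t' ht'
    obtain ⟨j, _, rfl⟩ := Finset.mem_image.mp ht'
    simp [ht]
  · intro i
    refine ⟨b + (f (l (some i)) + M).toNat + dd (l (some i)), hdd2 (l (some i)), ?_⟩
    have hsum : ∑ t' ∈ W.image t, y i t' = ∑ j ∈ W, g (some i) j := by
      rw [Finset.sum_image fun j1 _ j2 _ h => htinj j1 (Finset.mem_univ _) j2 (Finset.mem_univ _) h]
      rfl
    push_cast
    rw [Int.toNat_of_nonneg (hnn _), Int.toNat_of_nonneg (hnn _)]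
    rw [hsum, hdc (some i), hdc none, hsplit (some i)]
    ring

section CST

variable {k : ℕ} (y : Fin k → ℕ → ℤ) (C : ℕ → Set ℕ)

/-- The partial-sum value for index set `F`. -/
def Sv (a : ℕ → ℕ) (H : ℕ → Finset ℕ) (i : Fin k) (F : Finset ℕ) : ℤ :=
  ∑ j ∈ F, ((a j : ℤ) + ∑ t ∈ H j, y i t)

lemma Sv_congr {a a' : ℕ → ℕ} {H H' : ℕ → Finset ℕ} {i : Fin k} {F : Finset ℕ}
    (h : ∀ j ∈ F, a j = a' j ∧ H j = H' j) : Sv y a H i F = Sv y a' H' i F :=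
  Finset.sum_congr rfl fun j hj => by rw [(h j hj).1, (h j hj).2]

/-- The invariant carried through the recursion: state is `(level, a, H)`. -/
def CSTInv (n : ℕ) (s : ℕ × (ℕ → ℕ) × (ℕ → Finset ℕ)) : Prop :=
  (∀ j < n, (s.2.2 j).Nonempty) ∧
  (∀ j, j + 1 < n → ∀ u ∈ s.2.2 j, ∀ v ∈ s.2.2 (j + 1), u < v) ∧
  (∀ i : Fin k, ∀ F : Finset ℕ, F.Nonempty → (∀ j ∈ F, j < n) →
    ∃ b ∈ C 0, (b : ℤ) = Sv y s.2.1 s.2.2 i F ∧ ∀ x ∈ C s.1, b + x ∈ C 0)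

theorem furstenberg_centralSetsTheorem (A : Set ℕ) (hA : NatCentral A)
    (k : ℕ) (y : Fin k → ℕ → ℤ) :
    ∃ (a : ℕ → ℕ) (H : ℕ → Finset ℕ),
      (∀ n, (H n).Nonempty) ∧
      (∀ n, ∀ s ∈ H n, ∀ t ∈ H (n + 1), s < t) ∧
      (∀ i : Fin k, ∀ F : Finset ℕ, F.Nonempty →
        (∑ n ∈ F, ((a n : ℤ) + ∑ t ∈ H n, y i t)) ∈ (Nat.cast '' A : Set ℤ)) := by
  classical
  obtain ⟨C, hCA, hCdec, hCpws, hCshift⟩ := hA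
  have hmono : ∀ m n : ℕ, m ≤ n → C n ⊆ C m := by
    intro m n h
    induction h with
    | refl => exact subset_rfl
    | step _ ih => exact (hCdec _).trans ih
  have hlvl : ∀ T : Finset ℕ, (∀ x ∈ T, x ∈ C 0) →
      ∃ m, ∀ x ∈ T, ∀ s ∈ C m, x + s ∈ C 0 := by
    intro T
    induction T using Finset.induction_on with
    | empty => exact fun _ => ⟨0, by simp⟩
    | @insert x T hx ih =>
      intro h
      obtain ⟨m1, hm1⟩ := ih fun z hz => h z (Finset.mem_insert_of_mem hz)
      obtain ⟨m2, hm2⟩ := hCshift 0 x (h x (Finset.mem_insert_self _ _))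
      refine ⟨max m1 m2, fun z hz s hs => ?_⟩
      rcases Finset.mem_insert.mp hz with rfl | hz
      · exact hm2 (hmono m2 _ (le_max_right m1 m2) hs)
      · exact hm1 z hz s (hmono m1 _ (le_max_left m1 m2) hs)
  -- one step of the construction
  have hstep : ∀ n (s : ℕ × (ℕ → ℕ) × (ℕ → Finset ℕ)), CSTInv y C n s →
      ∃ s', CSTInv y C (n + 1) s' ∧
        ∀ j, j ≠ n → s'.2.1 j = s.2.1 j ∧ s'.2.2 j = s.2.2 j := by
    rintro n ⟨ν, a, H⟩ ⟨h1, h2, h3⟩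
    set n0 : ℕ := (H (n - 1)).sup id + 1 with hn0
    obtain ⟨aN, haN, HN, hHNne, hHNge, hbN⟩ := natPWS_key (C ν) (hCpws ν) k y n0
    set a' := Function.update a n aN with ha'
    set H' := Function.update H n HN with hH'
    have hupdA : ∀ j, j ≠ n → a' j = a j ∧ H' j = H j := fun j hj =>
      ⟨Function.update_of_ne hj _ _, Function.update_of_ne hj _ _⟩
    have hnew : ∀ i : Fin k, ∀ F : Finset ℕ, F.Nonempty → (∀ j ∈ F, j < n + 1) →
        ∃ b ∈ C 0, (b : ℤ) = Sv y a' H' i F := by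
      intro i F hFne hFlt
      by_cases hnF : n ∈ F
      · obtain ⟨bi, hbiD, hbi⟩ := hbN i
        have hterm : ((a' n : ℤ) + ∑ t ∈ H' n, y i t) = (bi : ℤ) := by
          rw [ha', hH', Function.update_self, Function.update_self, hbi]
        have hsv : Sv y a' H' i F
            = (bi : ℤ) + Sv y a' H' i (F.erase n) := by
          rw [Sv, ← Finset.add_sum_erase _ _ hnF, hterm]; rfl
        by_cases hFe : (F.erase n).Nonempty
        · obtain ⟨b, hb0, hbeq, hbsh⟩ := h3 i (F.erase n) hFe (fun j hj => by
            have := Finset.mem_erase.mp hj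
            have := hFlt j (Finset.mem_of_mem_erase hj)
            omega)
          refine ⟨b + bi, hbsh bi hbiD, ?_⟩
          rw [hsv]
          have hbeq' : (b : ℤ) = Sv y a H i (F.erase n) := hbeq
          have heq2 : Sv y a' H' i (F.erase n) = Sv y a H i (F.erase n) :=
            Sv_congr y fun j hj => hupdA j (Finset.mem_erase.mp hj).1
          rw [heq2, ← hbeq']
          push_cast; ring
        · have hFn : F = {n} := by
            apply Finset.eq_singleton_iff_unique_mem.mpr
            refine ⟨hnF, fun z hz => ?_⟩
            by_contra hzn
            exact hFe ⟨z, Finset.mem_erase.mpr ⟨hzn, hz⟩⟩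
          refine ⟨bi, hmono 0 ν (Nat.zero_le ν) hbiD, ?_⟩
          rw [hFn, Sv, Finset.sum_singleton, hterm]
      · obtain ⟨b, hb0, hbeq, -⟩ := h3 i F hFne (fun j hj => by
          have := hFlt j hj
          have : j ≠ n := fun h => hnF (h ▸ hj)
          omega)
        refine ⟨b, hb0, ?_⟩
        have hbeq' : (b : ℤ) = Sv y a H i F := hbeq
        rw [hbeq']
        exact Sv_congr y fun j hj =>
          ⟨((hupdA j (fun h => hnF (h ▸ hj))).1).symm,
           ((hupdA j (fun h => hnF (h ▸ hj))).2).symm⟩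
    have hQ : ∀ i : Fin k, ∀ F : Finset ℕ, ∃ b : ℕ,
        F.Nonempty → (∀ j ∈ F, j < n + 1) → b ∈ C 0 ∧ (b : ℤ) = Sv y a' H' i F := by
      intro i F
      by_cases hF : F.Nonempty ∧ ∀ j ∈ F, j < n + 1
      · obtain ⟨b, hb1, hb2⟩ := hnew i F hF.1 hF.2
        exact ⟨b, fun _ _ => ⟨hb1, hb2⟩⟩
      · exact ⟨0, fun h1 h2 => absurd ⟨h1, h2⟩ hF⟩
    choose bf hbf using hQ
    set T : Finset ℕ := ((Finset.univ : Finset (Fin k)) ×ˢ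
      ((Finset.range (n + 1)).powerset.filter Finset.Nonempty)).image
        fun p => bf p.1 p.2 with hT
    have hT0 : ∀ x ∈ T, x ∈ C 0 := by
      intro x hx
      obtain ⟨⟨i, F⟩, hp, rfl⟩ := Finset.mem_image.mp hx
      obtain ⟨-, hF⟩ := Finset.mem_product.mp hp
      obtain ⟨hFsub, hFne⟩ := Finset.mem_filter.mp hF
      exact (hbf i F hFne fun j hj =>
        Finset.mem_range.mp (Finset.mem_powerset.mp hFsub hj)).1
    obtain ⟨m, hm⟩ := hlvl T hT0
    refine ⟨(m, a', H'), ⟨?_, ?_, ?_⟩, hupdA⟩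
    · intro j hj
      show (H' j).Nonempty
      rcases Nat.lt_succ_iff_lt_or_eq.mp hj with hj | rfl
      · rw [(hupdA j (Nat.ne_of_lt hj)).2]; exact h1 j hj
      · rw [hH', Function.update_self]; exact hHNne
    · intro j hj u hu v hv
      have hu' : u ∈ H' j := hu
      have hv' : v ∈ H' (j + 1) := hv
      rcases Nat.lt_succ_iff_lt_or_eq.mp hj with hj | hj
      · rw [(hupdA j (by omega)).2] at hu'
        rw [(hupdA (j + 1) (by omega)).2] at hv'
        exact h2 j hj u hu' v hv'
      · -- j + 1 = n
        rw [(hupdA j (by omega)).2] at hu'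
        have hvHN : v ∈ HN := by
          rw [hj, hH'] at hv'
          simpa using hv'
        have hvge := hHNge v hvHN
        have hn1 : n0 = (H j).sup id + 1 := by
          rw [hn0]
          have : n - 1 = j := by omega
          rw [this]
        have hsup : u ≤ (H j).sup id := Finset.le_sup (f := id) hu'
        omega
    · intro i F hFne hFlt
      have hsub : F ∈ (Finset.range (n + 1)).powerset.filter Finset.Nonempty := by
        refine Finset.mem_filter.mpr ⟨Finset.mem_powerset.mpr fun j hj =>
          Finset.mem_range.mpr (hFlt j hj), hFne⟩
      have hbT : bf i F ∈ T := Finset.mem_image.mpr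
        ⟨(i, F), Finset.mem_product.mpr ⟨Finset.mem_univ _, hsub⟩, rfl⟩
      obtain ⟨hb0, hbeq⟩ := hbf i F hFne hFlt
      exact ⟨bf i F, hb0, hbeq, hm _ hbT⟩
  have inv0 : CSTInv y C 0 ((0 : ℕ), (fun _ => 0), (fun _ => (∅ : Finset ℕ))) := by
    refine ⟨fun j hj => absurd hj (by omega), fun j hj => absurd hj (by omega), ?_⟩
    intro i F hFne hFlt
    obtain ⟨j, hj⟩ := hFne
    exact absurd (hFlt j hj) (by omega)
  let st : (n : ℕ) → {s : ℕ × (ℕ → ℕ) × (ℕ → Finset ℕ) // CSTInv y C n s} :=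
    fun n => Nat.rec ⟨((0 : ℕ), (fun _ => 0), (fun _ => (∅ : Finset ℕ))), inv0⟩
      (fun n ih => ⟨Classical.choose (hstep n ih.1 ih.2),
        (Classical.choose_spec (hstep n ih.1 ih.2)).1⟩) n
  have hagree : ∀ n, ∀ j, j ≠ n →
      (st (n + 1)).1.2.1 j = (st n).1.2.1 j ∧ (st (n + 1)).1.2.2 j = (st n).1.2.2 j :=
    fun n => (Classical.choose_spec (hstep n (st n).1 (st n).2)).2
  set aF : ℕ → ℕ := fun n => (st (n + 1)).1.2.1 n with haF
  set HF : ℕ → Finset ℕ := fun n => (st (n + 1)).1.2.2 n with hHF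
  have hstab : ∀ m n, n < m → (st m).1.2.1 n = aF n ∧ (st m).1.2.2 n = HF n := by
    intro m
    induction m with
    | zero => omega
    | succ p ih =>
      intro n hn
      rcases Nat.lt_succ_iff_lt_or_eq.mp hn with h | rfl
      · have hag := hagree p n (by omega)
        exact ⟨hag.1.trans (ih n h).1, hag.2.trans (ih n h).2⟩
      · exact ⟨rfl, rfl⟩
  refine ⟨aF, HF, ?_, ?_, ?_⟩
  · intro n
    exact (st (n + 1)).2.1 n (by omega)
  · intro n u hu v hv
    have h2 := (st (n + 2)).2.2.1 n (by omega)
    have e1 := (hstab (n + 2) n (by omega)).2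
    have e2 := (hstab (n + 2) (n + 1) (by omega)).2
    exact h2 u (e1.symm ▸ hu) v (e2.symm ▸ hv)
  · intro i F hFne
    set m : ℕ := F.sup id + 1 with hmdef
    have hFlt : ∀ j ∈ F, j < m := fun j hj => by
      have : j ≤ F.sup id := Finset.le_sup (f := id) hj
      omega
    obtain ⟨b, hb0, hbeq, -⟩ := (st m).2.2.2 i F hFne hFlt
    refine ⟨b, hCA 0 hb0, ?_⟩
    rw [hbeq]
    exact Sv_congr y fun j hj =>
      ⟨(hstab m j (hFlt j hj)).1, (hstab m j (hFlt j hj)).2⟩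
end CST
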